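/- arXiv:1701.03888 — 4 statements merged into one kernel-verified Lean document; each statement's English description precedes it below -/
import Mathlib

section
/- For every natural number N, every integer k with 0 ≤ k ≤ N, and all real numbers x and Δ, the identity P̃^{(N+1,1/2)}_{k+1}(x) = ((k+1)x + Δ²)·P^{(N,1/2)}_k(x) − k(k+1)(N−k)·x·P^{(N,1/2)}_{k−1}(x) holds (with the convention P^{(N,1/2)}_{−1}(x) = 0). -/
/-- The constraint polynomials `P^{(N,ε)}_k(x)` of the asymmetric quantum Rabi model,
defined by the recursion `P₀ = 1`, `P₁ = x + Δ² − 1 − 2ε`,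
`P_k = (k x + Δ² − k² − 2kε) P_{k−1} − k(k−1)(N−k+1) x P_{k−2}`. -/
noncomputable def constraintP (N : ℕ) (ε Δ x : ℝ) : ℕ → ℝ
  | 0 => 1
  | 1 => x + Δ ^ 2 - 1 - 2 * ε
  | (k + 2) =>
      (((k : ℝ) + 2) * x + Δ ^ 2 - ((k : ℝ) + 2) ^ 2 - 2 * ((k : ℝ) + 2) * ε) *
          constraintP N ε Δ x (k + 1) -
        ((k : ℝ) + 2) * ((k : ℝ) + 1) * ((N : ℝ) - ((k : ℝ) + 2) + 1) * x *
          constraintP N ε Δ x k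

/-- The companion constraint polynomials `P̃^{(N,ε)}_k(x)`, i.e. the same recursion with
`ε` replaced by `−ε`. -/
noncomputable def constraintPt (N : ℕ) (ε Δ x : ℝ) : ℕ → ℝ
  | 0 => 1
  | 1 => x + Δ ^ 2 - 1 + 2 * ε
  | (k + 2) =>
      (((k : ℝ) + 2) * x + Δ ^ 2 - ((k : ℝ) + 2) ^ 2 + 2 * ((k : ℝ) + 2) * ε) *
          constraintPt N ε Δ x (k + 1) -
        ((k : ℝ) + 2) * ((k : ℝ) + 1) * ((N : ℝ) - ((k : ℝ) + 2) + 1) * x *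
          constraintPt N ε Δ x k

lemma constraintPt_rec (N : ℕ) (ε Δ x : ℝ) (k : ℕ) :
    constraintPt N ε Δ x (k + 2) =
      (((k : ℝ) + 2) * x + Δ ^ 2 - ((k : ℝ) + 2) ^ 2 + 2 * ((k : ℝ) + 2) * ε) *
          constraintPt N ε Δ x (k + 1) -
        ((k : ℝ) + 2) * ((k : ℝ) + 1) * ((N : ℝ) - ((k : ℝ) + 2) + 1) * x *
          constraintPt N ε Δ x k := rfl

lemma constraintP_succ (N : ℕ) (Δ x : ℝ) (k : ℕ) :
    constraintP N (1 / 2) Δ x (k + 1) =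
      (((k : ℝ) + 1) * x + Δ ^ 2 - ((k : ℝ) + 1) ^ 2 - ((k : ℝ) + 1)) *
          constraintP N (1 / 2) Δ x k -
        ((k : ℝ) + 1) * (k : ℝ) * ((N : ℝ) - (k : ℝ)) * x *
          constraintP N (1 / 2) Δ x (k - 1) := by
  cases k with
  | zero => simp [constraintP]
  | succ k =>
    show constraintP N (1 / 2) Δ x (k + 2) = _
    rw [constraintP]
    push_cast
    ring_nf

/-- For all `0 ≤ k ≤ N` and all real `x`, `Δ`:
`P̃^{(N+1,1/2)}_{k+1}(x) = ((k+1)x + Δ²)·P^{(N,1/2)}_k(x) − k(k+1)(N−k)·x·P^{(N,1/2)}_{k−1}(x)`.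
(When `k = 0` the last term vanishes because of the factor `k`, which realizes the convention
`P^{(N,1/2)}_{−1} = 0`.) -/
theorem constraintPt_eq_combination (N k : ℕ) (hk : k ≤ N) (x Δ : ℝ) :
    constraintPt (N + 1) (1 / 2) Δ x (k + 1) =
      (((k : ℝ) + 1) * x + Δ ^ 2) * constraintP N (1 / 2) Δ x k -
        (k : ℝ) * ((k : ℝ) + 1) * ((N : ℝ) - (k : ℝ)) * x *
          constraintP N (1 / 2) Δ x (k - 1) := by
  match k with
  | 0 => simp [constraintP, constraintPt]
  | 1 =>
    simp only [constraintP, constraintPt, constraintPt_rec]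
    push_cast
    simp only [constraintP]
    ring_nf
  | k + 2 =>
    have h1 := constraintPt_eq_combination N (k + 1) (by omega) x Δ
    have h0 := constraintPt_eq_combination N k (by omega) x Δ
    have e2 := constraintP_succ N Δ x (k + 1)
    have e3 := constraintP_succ N Δ x k
    simp only [show k + 1 - 1 = k from rfl] at h1 e2
    simp only [show k + 2 - 1 = k + 1 from rfl]
    rw [show k + 2 + 1 = (k + 1) + 2 from rfl, constraintPt_rec, h1, h0, e2, e3]
    push_cast
    ring
end

section
/- For every natural number N, every real Δ, and every real x > 0, one has P̃^{(N+1,1/2)}_{N+1}(x) = 0 if and only if P^{(N,1/2)}_N(x) = 0; that is, the positive roots of P^{(N,1/2)}_N and of P̃^{(N+1,1/2)}_{N+1} coincide. -/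
lemma constraintP_zero (N : ℕ) (ε Δ x : ℝ) : constraintP N ε Δ x 0 = 1 := rfl

lemma constraintP_one (N : ℕ) (ε Δ x : ℝ) :
    constraintP N ε Δ x 1 = x + Δ ^ 2 - 1 - 2 * ε := rfl

lemma constraintP_rec (N : ℕ) (ε Δ x : ℝ) (k : ℕ) :
    constraintP N ε Δ x (k + 2) =
      (((k : ℝ) + 2) * x + Δ ^ 2 - ((k : ℝ) + 2) ^ 2 - 2 * ((k : ℝ) + 2) * ε) *
          constraintP N ε Δ x (k + 1) -
        ((k : ℝ) + 2) * ((k : ℝ) + 1) * ((N : ℝ) - ((k : ℝ) + 2) + 1) * x *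
          constraintP N ε Δ x k := rfl

lemma constraintPt_zero (N : ℕ) (ε Δ x : ℝ) : constraintPt N ε Δ x 0 = 1 := rfl

lemma constraintPt_one (N : ℕ) (ε Δ x : ℝ) :
    constraintPt N ε Δ x 1 = x + Δ ^ 2 - 1 + 2 * ε := rfl

set_option maxHeartbeats 1600000 in
/-- Key identity: `P̃^{(N+1,1/2)}_{k+2} = ((k+2)x + Δ²) P^{(N,1/2)}_{k+1}
      − (k+1)(k+2)(N−k−1) x P^{(N,1/2)}_k`. -/
lemma constraintPt_key (N : ℕ) (Δ x : ℝ) : ∀ k : ℕ,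
    constraintPt (N + 1) (1 / 2) Δ x (k + 2) =
      (((k : ℝ) + 2) * x + Δ ^ 2) * constraintP N (1 / 2) Δ x (k + 1) -
        ((k : ℝ) + 1) * ((k : ℝ) + 2) * ((N : ℝ) - (k : ℝ) - 1) * x *
          constraintP N (1 / 2) Δ x k := by
  intro k
  induction k using Nat.twoStepInduction with
  | zero =>
      rw [constraintPt_rec, constraintPt_one, constraintPt_zero, constraintP_one,
        constraintP_zero]
      push_cast
      ring
  | one =>
      rw [show (1 : ℕ) + 2 = 0 + 2 + 1 from rfl]
      rw [show (0 : ℕ) + 2 + 1 = 1 + 2 from rfl, constraintPt_rec,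
        show (1 : ℕ) + 1 = 0 + 2 from rfl, constraintPt_rec,
        constraintPt_one, constraintPt_zero,
        show (1 : ℕ) + 1 = 0 + 2 from rfl, constraintP_rec,
        constraintP_one, constraintP_zero]
      push_cast
      ring
  | more n ih ih1 =>
      rw [show n + 2 + 2 = (n + 2) + 2 from rfl, constraintPt_rec,
        show n + 2 + 1 = n + 1 + 2 from rfl, ih1, ih]
      simp only [show n + 1 + 1 = n + 2 from rfl]
      rw [constraintP_rec N (1 / 2) Δ x (n + 1)]
      simp only [show n + 1 + 1 = n + 2 from rfl]
      rw [constraintP_rec N (1 / 2) Δ x n]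
      push_cast
      ring

/-- The positive roots of `P^{(N,1/2)}_N` and `P̃^{(N+1,1/2)}_{N+1}` coincide. -/
theorem constraintPt_pos_roots_coincide (N : ℕ) (Δ : ℝ) (x : ℝ) (hx : 0 < x) :
    constraintPt (N + 1) (1 / 2) Δ x (N + 1) = 0 ↔ constraintP N (1 / 2) Δ x N = 0 := by
  cases N with
  | zero =>
      rw [constraintPt_one, constraintP_zero]
      constructor
      · intro h
        nlinarith [sq_nonneg Δ]
      · intro h; exact absurd h one_ne_zero
  | succ n =>
      have hkey := constraintPt_key (n + 1) Δ x n
      push_cast at hkey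
      have h0 : ((n : ℝ) + 1) - (n : ℝ) - 1 = 0 := by ring
      rw [show n + 1 + 1 = n + 2 from rfl, hkey]
      have hpos : ((n : ℝ) + 2) * x + Δ ^ 2 > 0 := by positivity
      constructor
      · intro h
        have : (((n : ℝ) + 2) * x + Δ ^ 2) * constraintP (n + 1) (1 / 2) Δ x (n + 1) = 0 := by
          nlinarith [h]
        rcases mul_eq_zero.mp this with h' | h'
        · exact absurd h' (ne_of_gt hpos)
        · exact h'
      · intro h
        rw [h]
        nlinarith [h]
end

section
/- For every N ∈ ℕ, every k with 0 ≤ k ≤ N, and all real x, Δ, ε, the determinant of the tridiagonal matrix M^{(N,ε)}_k(x,Δ) equals (−1)^{k+1}·Δ²·P^{(N,ε)}_k(x). -/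
/-- The `(k+1)×(k+1)` tridiagonal matrix `M^{(N,ε)}_k(x,Δ)`: diagonal entries
`i² − i·x + 2εi − Δ²`, superdiagonal entries `(i+1)·x`, subdiagonal entries
`M[i+1][i] = i·(N−i)`, all other entries `0`. -/
noncomputable def tridiagM (N k : ℕ) (ε Δ x : ℝ) : Matrix (Fin (k + 1)) (Fin (k + 1)) ℝ :=
  Matrix.of fun i j =>
    if (i : ℕ) = (j : ℕ) then (i : ℝ) ^ 2 - (i : ℝ) * x + 2 * ε * (i : ℝ) - Δ ^ 2
    else if (j : ℕ) = (i : ℕ) + 1 then ((i : ℝ) + 1) * x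
    else if (i : ℕ) = (j : ℕ) + 1 then (j : ℝ) * ((N : ℝ) - (j : ℝ))
    else 0


noncomputable def triEnt (a b c : ℕ → ℝ) (i j : ℕ) : ℝ :=
  if i = j then a i else if j = i + 1 then b i else if i = j + 1 then c j else 0

noncomputable def triT (a b c : ℕ → ℝ) (n : ℕ) : Matrix (Fin (n+1)) (Fin (n+1)) ℝ :=
  Matrix.of fun i j => triEnt a b c i j

lemma coe_succAbove {n : ℕ} (p : Fin (n+1)) (i : Fin n) :
    ((p.succAbove i : Fin (n+1)) : ℕ) = if (i:ℕ) < (p:ℕ) then (i:ℕ) else (i:ℕ)+1 := by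
  rw [Fin.succAbove]
  split <;> rename_i h <;> simp only [Fin.lt_def, Fin.coe_castSucc] at h <;> simp [h]

lemma triEnt_far (a b c : ℕ → ℝ) {i j : ℕ} (h1 : i ≠ j) (h2 : j ≠ i + 1) (h3 : i ≠ j + 1) :
    triEnt a b c i j = 0 := by
  simp [triEnt, h1, h2, h3]

lemma trirec (a b c : ℕ → ℝ) (n : ℕ) :
    (triT a b c (n+2)).det =
      a (n+2) * (triT a b c (n+1)).det - b (n+1) * c (n+1) * (triT a b c n).det := by
  rw [Matrix.det_succ_row _ (Fin.last (n+2))]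
  rw [Fin.sum_univ_castSucc, Fin.sum_univ_castSucc]
  have hz : ∀ j : Fin (n+1),
      (-1 : ℝ) ^ ((Fin.last (n+2) : ℕ) + ((j.castSucc.castSucc : Fin (n+3)) : ℕ)) *
        triT a b c (n+2) (Fin.last (n+2)) j.castSucc.castSucc *
        ((triT a b c (n+2)).submatrix (Fin.last (n+2)).succAbove
          (j.castSucc.castSucc).succAbove).det = 0 := by
    intro j
    have hj : (j : ℕ) ≤ n := Nat.lt_succ_iff.mp j.isLt
    have : triT a b c (n+2) (Fin.last (n+2)) j.castSucc.castSucc = 0 := by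
      apply triEnt_far <;> simp <;> omega
    rw [this]; ring
  rw [Finset.sum_congr rfl (fun j _ => hz j), Finset.sum_const_zero]
  -- the two remaining terms
  have e2 : triT a b c (n+2) (Fin.last (n+2)) (Fin.last (n+2)) = a (n+2) := by
    simp [triT, triEnt]
  have e1 : triT a b c (n+2) (Fin.last (n+2)) (Fin.last (n+1)).castSucc = c (n+1) := by
    simp [triT, triEnt]
  rw [e1, e2]
  have m2 : (triT a b c (n+2)).submatrix (Fin.last (n+2)).succAbove
      (Fin.last (n+2)).succAbove = triT a b c (n+1) := by
    ext p q
    simp [Matrix.submatrix, triT, Fin.succAbove_last]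
  -- minor M1
  have m1 : ((triT a b c (n+2)).submatrix (Fin.last (n+2)).succAbove
      ((Fin.last (n+1)).castSucc.succAbove)).det = b (n+1) * (triT a b c n).det := by
    rw [Matrix.det_succ_column _ (Fin.last (n+1))]
    rw [Fin.sum_univ_castSucc]
    have hz2 : ∀ p : Fin (n+1),
        (-1 : ℝ) ^ (((p.castSucc : Fin (n+2)) : ℕ) + ((Fin.last (n+1) : ℕ))) *
          ((triT a b c (n+2)).submatrix (Fin.last (n+2)).succAbove
            ((Fin.last (n+1)).castSucc.succAbove)) p.castSucc (Fin.last (n+1)) *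
          ((((triT a b c (n+2)).submatrix (Fin.last (n+2)).succAbove
            ((Fin.last (n+1)).castSucc.succAbove)).submatrix p.castSucc.succAbove
            (Fin.last (n+1)).succAbove)).det = 0 := by
      intro p
      have hp : (p : ℕ) ≤ n := Nat.lt_succ_iff.mp p.isLt
      have hcol : (((Fin.last (n+1)).castSucc.succAbove (Fin.last (n+1)) : Fin (n+3)) : ℕ) = n + 2 := by
        rw [coe_succAbove]; simp
      have : ((triT a b c (n+2)).submatrix (Fin.last (n+2)).succAbove
          ((Fin.last (n+1)).castSucc.succAbove)) p.castSucc (Fin.last (n+1)) = 0 := by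
        simp only [Matrix.submatrix_apply, Fin.succAbove_last]
        apply triEnt_far <;> rw [hcol] <;> simp <;> omega
      rw [this]; ring
    rw [Finset.sum_congr rfl (fun p _ => hz2 p), Finset.sum_const_zero]
    have hcol : (((Fin.last (n+1)).castSucc.succAbove (Fin.last (n+1)) : Fin (n+3)) : ℕ) = n + 2 := by
      rw [coe_succAbove]; simp
    have eb : ((triT a b c (n+2)).submatrix (Fin.last (n+2)).succAbove
        ((Fin.last (n+1)).castSucc.succAbove)) (Fin.last (n+1)) (Fin.last (n+1)) = b (n+1) := by
      simp only [Matrix.submatrix_apply, Fin.succAbove_last]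
      have : ((Fin.castSucc (Fin.last (n+1)) : Fin (n+3)) : ℕ) = n + 1 := by simp
      simp [triT, triEnt, hcol]
    have mm : (((triT a b c (n+2)).submatrix (Fin.last (n+2)).succAbove
        ((Fin.last (n+1)).castSucc.succAbove)).submatrix (Fin.last (n+1)).succAbove
        (Fin.last (n+1)).succAbove) = triT a b c n := by
      ext r s
      have hs : (s : ℕ) ≤ n - 0 := by omega
      simp only [Matrix.submatrix_apply, Fin.succAbove_last]
      have h1 : (((Fin.last (n+1)).castSucc.succAbove (Fin.castSucc s) : Fin (n+3)) : ℕ) = (s : ℕ) := by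
        rw [coe_succAbove]; simp; omega
      show triEnt a b c _ _ = triEnt a b c (r : ℕ) (s : ℕ)
      rw [Fin.coe_castSucc, Fin.coe_castSucc, h1]
    rw [eb, mm]
    simp
  rw [m1, m2]
  simp [Fin.val_last]
  rw [show ((-1:ℝ))^(n+2+(n+1)) = -1 from Odd.neg_one_pow ⟨n+1, by ring⟩]
  ring

lemma triKey (N : ℕ) (ε Δ x : ℝ) : ∀ m : ℕ,
    (triT (fun i => (i:ℝ)^2 - (i:ℝ)*x + 2*ε*(i:ℝ) - Δ^2) (fun i => ((i:ℝ)+1)*x)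
      (fun j => (j:ℝ)*((N:ℝ)-(j:ℝ))) m).det = (-1)^(m+1) * Δ^2 * constraintP N ε Δ x m
  | 0 => by
      simp [Matrix.det_fin_one, triT, triEnt, constraintP]
  | 1 => by
      simp [Matrix.det_fin_two, triT, triEnt, constraintP]
      ring
  | (m+2) => by
      rw [trirec, triKey N ε Δ x (m+1), triKey N ε Δ x m]
      simp only [constraintP]
      push_cast
      ring


/-- `det M^{(N,ε)}_k(x,Δ) = (−1)^{k+1}·Δ²·P^{(N,ε)}_k(x)` for `0 ≤ k ≤ N`. -/
theorem det_tridiagM (N k : ℕ) (hk : k ≤ N) (x Δ ε : ℝ) :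
    (tridiagM N k ε Δ x).det = (-1) ^ (k + 1) * Δ ^ 2 * constraintP N ε Δ x k := by
  have h : tridiagM N k ε Δ x = triT (fun i => (i:ℝ)^2 - (i:ℝ)*x + 2*ε*(i:ℝ) - Δ^2)
      (fun i => ((i:ℝ)+1)*x) (fun j => (j:ℝ)*((N:ℝ)-(j:ℝ))) k := rfl
  rw [h, triKey]
end

section
/- Let N ≥ 1 be a natural number, ε and Δ real numbers, and let x > 0 be a real root of the constraint polynomial, i.e. P^{(N,ε)}_N(x) = 0. Then the (N+1)×(N+1) real tridiagonal matrix M^{(N,ε)}_N(x,Δ) has rank exactly N. -/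
def tf (N : ℕ) (ε Δ x : ℝ) (i j : ℕ) : ℝ :=
  if i = j then (i:ℝ)^2 - (i:ℝ)*x + 2*ε*(i:ℝ) - Δ^2
  else if j = i+1 then ((i:ℝ)+1)*x
  else if i = j+1 then (j:ℝ)*((N:ℝ)-(j:ℝ))
  else 0

lemma tri_apply (N k : ℕ) (ε Δ x : ℝ) (i j : Fin (k+1)) :
    tridiagM N k ε Δ x i j = tf N ε Δ x (i:ℕ) (j:ℕ) := rfl

lemma tri_ext {k l : ℕ} {N : ℕ} {ε Δ x : ℝ} (f : Fin (l+1) → Fin (k+1)) (g : Fin (l+1) → Fin (k+1))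
    (hf : ∀ i, ((f i : ℕ)) = (i:ℕ)) (hg : ∀ j, ((g j : ℕ)) = (j:ℕ)) :
    (tridiagM N k ε Δ x).submatrix f g = tridiagM N l ε Δ x := by
  ext i j
  rw [Matrix.submatrix_apply, tri_apply, tri_apply, hf, hg]

lemma det_step (N k : ℕ) (ε Δ x : ℝ) :
    (tridiagM N (k+2) ε Δ x).det =
      (((k:ℝ)+2)^2 - ((k:ℝ)+2)*x + 2*ε*((k:ℝ)+2) - Δ^2) * (tridiagM N (k+1) ε Δ x).det
      - (((k:ℝ)+2)*x) * (((k:ℝ)+1)*((N:ℝ)-((k:ℝ)+1))) * (tridiagM N k ε Δ x).det := by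
  have hf : ∀ m : Fin (k+2),
      (((Fin.last (k+1)).castSucc).succAbove m : ℕ) = if (m:ℕ) < k+1 then (m:ℕ) else (m:ℕ)+1 := by
    intro m; simp [Fin.succAbove, Fin.lt_def, apply_ite (Fin.val)]
  -- the minor for column k+1 in the last row
  set A := tridiagM N (k+2) ε Δ x with hA
  set B := A.submatrix Fin.castSucc ((Fin.last (k+1)).castSucc).succAbove with hB
  have hBdet : B.det = (((k:ℝ)+2)*x) * (tridiagM N k ε Δ x).det := by
    rw [Matrix.det_succ_column _ (Fin.last (k+1)), Fin.sum_univ_castSucc]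
    have h0 : ∀ i : Fin (k+1),
        (-1:ℝ) ^ ((i.castSucc : ℕ) + (Fin.last (k+1) : ℕ)) * B i.castSucc (Fin.last (k+1)) *
          (B.submatrix i.castSucc.succAbove (Fin.last (k+1)).succAbove).det = 0 := by
      intro i
      have hi := i.is_lt
      have : B i.castSucc (Fin.last (k+1)) = 0 := by
        rw [hB, Matrix.submatrix_apply, hA, tri_apply]
        simp only [hf, Fin.coe_castSucc, Fin.val_last]
        rw [if_neg (by omega)]
        rw [tf, if_neg (by omega), if_neg (by omega), if_neg (by omega)]
      rw [this]; ring
    rw [Finset.sum_eq_zero (fun i _ => h0 i), zero_add]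
    have hent : B (Fin.last (k+1)) (Fin.last (k+1)) = ((k:ℝ)+2)*x := by
      rw [hB, Matrix.submatrix_apply, hA, tri_apply]
      simp only [hf, Fin.coe_castSucc, Fin.val_last]
      rw [if_neg (by omega)]
      rw [tf, if_neg (by omega), if_pos (by omega)]
      push_cast; ring
    have hminor : B.submatrix (Fin.last (k+1)).succAbove (Fin.last (k+1)).succAbove
        = tridiagM N k ε Δ x := by
      rw [hB, Matrix.submatrix_submatrix]
      apply tri_ext
      · intro i; simp [Fin.succAbove_last]
      · intro j
        simp only [Function.comp_apply, Fin.succAbove_last, hf, Fin.coe_castSucc]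
        rw [if_pos (by omega)]
    rw [hent, hminor]
    simp only [Fin.val_last]
    have hpow : (-1:ℝ) ^ (k+1+(k+1)) = 1 := by
      rw [show k+1+(k+1) = 2*(k+1) by omega, pow_mul]; norm_num
    rw [hpow]; ring
  rw [Matrix.det_succ_row _ (Fin.last (k+2)), Fin.sum_univ_castSucc, Fin.sum_univ_castSucc]
  have hz : ∀ j : Fin (k+1),
      (-1:ℝ) ^ ((Fin.last (k+2) : ℕ) + (j.castSucc.castSucc : ℕ)) *
        A (Fin.last (k+2)) j.castSucc.castSucc *
        (A.submatrix (Fin.last (k+2)).succAbove j.castSucc.castSucc.succAbove).det = 0 := by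
    intro j
    have hj := j.is_lt
    have : A (Fin.last (k+2)) j.castSucc.castSucc = 0 := by
      rw [hA]; rw [tri_apply]
      simp only [Fin.val_last, Fin.coe_castSucc]
      rw [tf, if_neg (by omega), if_neg (by omega), if_neg (by omega)]
    rw [this]; ring
  rw [Finset.sum_eq_zero (fun j _ => hz j), zero_add]
  have hsub : A (Fin.last (k+2)) (Fin.last (k+1)).castSucc = ((k:ℝ)+1)*((N:ℝ)-((k:ℝ)+1)) := by
    rw [hA, tri_apply]
    simp only [Fin.val_last, Fin.coe_castSucc]
    rw [tf, if_neg (by omega), if_neg (by omega), if_pos (by omega)]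
    push_cast; ring
  have hdiag : A (Fin.last (k+2)) (Fin.last (k+2)) = ((k:ℝ)+2)^2 - ((k:ℝ)+2)*x + 2*ε*((k:ℝ)+2) - Δ^2 := by
    rw [hA, tri_apply]
    simp only [Fin.val_last]
    rw [tf, if_pos rfl]
    push_cast; ring
  have hminor2 : A.submatrix (Fin.last (k+2)).succAbove (Fin.last (k+2)).succAbove
      = tridiagM N (k+1) ε Δ x := by
    apply tri_ext <;> intro i <;> simp [Fin.succAbove_last]
  have hB' : A.submatrix (Fin.last (k+2)).succAbove (Fin.last (k+1)).castSucc.succAbove = B := by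
    rw [hB, Fin.succAbove_last]
  rw [hsub, hdiag, hminor2, hB', hBdet]
  simp only [Fin.val_last, Fin.coe_castSucc]
  have : (-1:ℝ) ^ (k + 2 + (k+1)) = -1 := by
    rw [show k+2+(k+1) = 2*(k+1)+1 by omega, pow_succ, pow_mul]
    norm_num
  rw [this]
  have h2 : (-1:ℝ) ^ (k + 2 + (k+2)) = 1 := by
    rw [show k+2+(k+2) = 2*(k+2) by omega, pow_mul]
    norm_num
  rw [h2]
  ring

lemma det_tri (N : ℕ) (ε Δ x : ℝ) :
    ∀ k, (tridiagM N k ε Δ x).det = (-1)^(k+1) * Δ^2 * constraintP N ε Δ x k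
  | 0 => by
    rw [Matrix.det_fin_one]
    simp [tridiagM, constraintP]
  | 1 => by
    rw [Matrix.det_fin_two]
    simp [tridiagM, constraintP]
    ring
  | (k+2) => by
    rw [det_step, det_tri N ε Δ x (k+1), det_tri N ε Δ x k]
    show _ = _ * _ * ((((k : ℝ) + 2) * x + Δ ^ 2 - ((k : ℝ) + 2) ^ 2 - 2 * ((k : ℝ) + 2) * ε) *
          constraintP N ε Δ x (k + 1) -
        ((k : ℝ) + 2) * ((k : ℝ) + 1) * ((N : ℝ) - ((k : ℝ) + 2) + 1) * x *
          constraintP N ε Δ x k)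
    rw [show k+1+1 = k+2 by rfl, show k+2+1 = k+3 by rfl,
      show (-1:ℝ)^(k+2) = (-1)^k * 1 by rw [pow_succ, pow_succ]; ring,
      show (-1:ℝ)^(k+1) = (-1)^k * (-1) by rw [pow_succ],
      show (-1:ℝ)^(k+3) = (-1)^k * (-1) by rw [pow_succ, pow_succ, pow_succ]; ring]
    ring


/-- If `x > 0` is a root of `P^{(N,ε)}_N`, then `M^{(N,ε)}_N(x,Δ)` has rank exactly `N`. -/
theorem rank_tridiagM (N : ℕ) (hN : 1 ≤ N) (ε Δ : ℝ) (x : ℝ) (hx : 0 < x)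
    (hroot : constraintP N ε Δ x N = 0) :
    (tridiagM N N ε Δ x).rank = N := by
  set A := tridiagM N N ε Δ x with hA
  have hdet : A.det = 0 := by rw [hA, det_tri, hroot, mul_zero]
  set L : Matrix (Fin N) (Fin N) ℝ := Matrix.of fun i j => A i.castSucc j.succ with hL
  have hLtri : L.BlockTriangular OrderDual.toDual := by
    intro i j hij
    have h1 : (i:ℕ) < (j:ℕ) := hij
    show A i.castSucc j.succ = 0
    rw [hA, tri_apply]
    simp only [Fin.coe_castSucc, Fin.val_succ]
    rw [tf, if_neg (by omega), if_neg (by omega), if_neg (by omega)]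
  have hLdet : L.det = ∏ i : Fin N, ((((i:ℕ):ℝ))+1)*x := by
    rw [Matrix.det_of_lowerTriangular L hLtri]
    apply Finset.prod_congr rfl
    intro i _
    show A i.castSucc i.succ = _
    rw [hA, tri_apply]
    simp only [Fin.coe_castSucc, Fin.val_succ]
    rw [tf, if_neg (by omega), if_pos rfl]
  have hLdet0 : L.det ≠ 0 := by
    rw [hLdet]
    apply Finset.prod_ne_zero_iff.mpr
    intro i _
    positivity
  have hLunit : IsUnit L := (Matrix.isUnit_iff_isUnit_det L).mpr (isUnit_iff_ne_zero.mpr hLdet0)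
  have hLrank : L.rank = N := by rw [Matrix.rank_of_isUnit L hLunit, Fintype.card_fin]
  set P : Matrix (Fin N) (Fin (N+1)) ℝ := Matrix.of fun i j => if j = i.castSucc then 1 else 0
    with hP
  set Q : Matrix (Fin (N+1)) (Fin N) ℝ := Matrix.of fun j i => if j = i.succ then 1 else 0 with hQ
  have h1 : ∀ (a : Fin (N+1)) (j : Fin N), (A * Q) a j = A a j.succ := by
    intro a j
    rw [Matrix.mul_apply]
    simp [hQ, mul_ite]
  have hPAQ : L = P * (A * Q) := by
    ext i j
    rw [Matrix.mul_apply]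
    simp only [h1, hP, Matrix.of_apply, ite_mul, one_mul, zero_mul]
    rw [Finset.sum_ite_eq' Finset.univ i.castSucc (fun a => A a j.succ)]
    simp [hL]
  have hle : L.rank ≤ A.rank := by
    rw [hPAQ]
    exact le_trans (Matrix.rank_mul_le_right P (A*Q)) (Matrix.rank_mul_le_left A Q)
  have hub : A.rank ≤ N := by
    by_contra h
    push_neg at h
    have hcard : A.rank = N + 1 :=
      le_antisymm (by simpa using A.rank_le_card_width) h
    have htop : LinearMap.range A.mulVecLin = ⊤ := by
      apply Submodule.eq_top_of_finrank_eq
      rw [show Module.finrank ℝ ↥(LinearMap.range A.mulVecLin) = A.rank from rfl, hcard]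
      simp [Module.finrank_fintype_fun_eq_card]
    have hsurj : Function.Surjective A.mulVec := by
      intro v
      obtain ⟨w, hw⟩ := LinearMap.range_eq_top.mp htop v
      exact ⟨w, hw⟩
    have hu : IsUnit A := Matrix.mulVec_surjective_iff_isUnit.mp hsurj
    have := (Matrix.isUnit_iff_isUnit_det A).mp hu
    rw [hdet] at this
    exact (by simpa using this : False)
  omega
end
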